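/- Let S_1(T,U,V) = T^2 + t_1(U+V)T + t_2^0(U^2+V^2) + t_2^1 UV with integer coefficients. If the product S_1(T+U,U,V)·S_2(T,U,V), where S_2 is a monic symmetric-in-(U,V) polynomial of degree 5 in T, is congruent modulo the ideal (R^4(U,V), U^5) ⊂ ℤ[T,U,V] to a polynomial in T and U alone plus multiples of R^4 and R^5, then (t_1, t_2^0, t_2^1) ∈ {(0,0,0), (−1,0,0)}. -/
import Mathlib


open MvPolynomial

/-- The polynomial ring `ℤ[T,U,V]`. -/
abbrev MP : Type := MvPolynomial (Fin 3) ℤ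

noncomputable section

/-- The variable `T`. -/
def T : MP := X 0
/-- The variable `U`. -/
def U : MP := X 1
/-- The variable `V`. -/
def V : MP := X 2

/-- `R n (U,V) = ∑_{k=0}^{n} U^k V^(n-k)` viewed inside `ℤ[T,U,V]`. -/
def R (n : ℕ) : MP := ∑ k ∈ Finset.range (n + 1), U ^ k * V ^ (n - k)

/-- A monic linear symmetric form `t + a(U+V)` evaluated at `t`. -/
def lin (a : ℤ) (t : MP) : MP := t + C a * (U + V)

/-- A monic quadratic form `t² + a₁(U+V)t + a₂(U²+V²) + a₃ UV` symmetric in `U,V`. -/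
def quad (a₁ a₂ a₃ : ℤ) (t : MP) : MP :=
  t ^ 2 + C a₁ * (U + V) * t + C a₂ * (U ^ 2 + V ^ 2) + C a₃ * (U * V)

/-- A monic cubic form
`t³ + a₁(U+V)t² + (a₂(U²+V²)+a₃UV)t + (a₄(U³+V³)+a₅(U²V+UV²))` symmetric in `U,V`. -/
def cub (a₁ a₂ a₃ a₄ a₅ : ℤ) (t : MP) : MP :=
  t ^ 3 + C a₁ * (U + V) * t ^ 2 + (C a₂ * (U ^ 2 + V ^ 2) + C a₃ * (U * V)) * t
    + (C a₄ * (U ^ 3 + V ^ 3) + C a₅ * (U ^ 2 * V + U * V ^ 2))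

end


noncomputable section
/-- exponent vector of `T^k U^a V^b`. -/
def e (k a b : ℕ) : Fin 3 →₀ ℕ :=
  Finsupp.single 0 k + Finsupp.single 1 a + Finsupp.single 2 b
end

lemma e_apply (k a b : ℕ) (i : Fin 3) :
    e k a b i = if i = 0 then k else if i = 1 then a else b := by
  fin_cases i <;> simp [e, Finsupp.single_apply]

lemma monE (k a b : ℕ) (c : ℤ) :
    (monomial (e k a b) c : MP) = C c * X 0 ^ k * X 1 ^ a * X 2 ^ b := by
  rw [X_pow_eq_monomial, X_pow_eq_monomial, X_pow_eq_monomial, C_mul_monomial,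
    monomial_mul, monomial_mul, e]
  simp [mul_one]

lemma e_le (k a b K A B : ℕ) : e k a b ≤ e K A B ↔ k ≤ K ∧ a ≤ A ∧ b ≤ B := by
  constructor
  · intro h
    exact ⟨by simpa [e_apply] using h 0, by simpa [e_apply] using h 1,
      by simpa [e_apply] using h 2⟩
  · rintro ⟨h0, h1, h2⟩ i
    fin_cases i <;> simpa [e_apply]

lemma e_sub (k a b K A B : ℕ) : e K A B - e k a b = e (K - k) (A - a) (B - b) := by
  ext i
  fin_cases i <;> simp [Finsupp.tsub_apply, e_apply]

lemma quadm (t₁ t₂ t₃ : ℤ) :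
    quad t₁ t₂ t₃ (T + U) =
      monomial (e 2 0 0) 1 + monomial (e 1 1 0) (2 + t₁) + monomial (e 1 0 1) t₁
        + monomial (e 0 2 0) (1 + t₁ + t₂) + monomial (e 0 1 1) (t₁ + t₃)
        + monomial (e 0 0 2) t₂ := by
  simp only [quad, T, U, V, monE, map_add, map_one, map_ofNat]
  ring

lemma R4m : _root_.R 4 = monomial (e 0 0 4) 1 + monomial (e 0 1 3) 1 + monomial (e 0 2 2) 1
    + monomial (e 0 3 1) 1 + monomial (e 0 4 0) 1 := by
  simp only [_root_.R, Finset.sum_range_succ, Finset.sum_range_zero, U, V, monE, map_one]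
  norm_num

lemma R5m : _root_.R 5 = monomial (e 0 0 5) 1 + monomial (e 0 1 4) 1 + monomial (e 0 2 3) 1
    + monomial (e 0 3 2) 1 + monomial (e 0 4 1) 1 + monomial (e 0 5 0) 1 := by
  simp only [_root_.R, Finset.sum_range_succ, Finset.sum_range_zero, U, V, monE, map_one]
  norm_num

lemma U5m : (U : MP) ^ 5 = monomial (e 0 5 0) 1 := by
  rw [monE]; simp [U]

lemma coeffQ (Q : MvPolynomial (Fin 2) ℤ) (k a b : ℕ) (hb : b ≠ 0) :
    coeff (e k a b) (rename (fun j : Fin 2 => j.castSucc) Q) = 0 := by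
  apply coeff_rename_eq_zero
  intro u hu
  exfalso
  apply hb
  have h2 : Finsupp.mapDomain (fun j : Fin 2 => j.castSucc) u 2 = 0 := by
    apply Finsupp.mapDomain_notin_range
    rintro ⟨j, hj⟩
    have h1 := congrArg Fin.val hj
    have := j.isLt
    simp at h1
    omega
  rw [hu] at h2
  simpa [e_apply] using h2

lemma coeffC (p : MvPolynomial (Fin 2) ℤ) (k a b : ℕ) (hk : k ≠ 0) :
    coeff (e k a b) (rename (fun j : Fin 2 => j.succ) p) = 0 := by
  apply coeff_rename_eq_zero
  intro u hu
  exfalso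
  apply hk
  have h2 : Finsupp.mapDomain (fun j : Fin 2 => j.succ) u 0 = 0 := by
    apply Finsupp.mapDomain_notin_range
    rintro ⟨j, hj⟩
    have h1 := congrArg Fin.val hj
    simp at h1
  rw [hu] at h2
  simpa [e_apply] using h2

set_option maxHeartbeats 4000000 in
/-- Chern polynomial equation for a uniform 7-bundle over `ℙ⁴` of splitting type `(2;2,5;1,0)`:
with `S₁(T,U,V) = T² + t₁(U+V)T + t₂⁰(U²+V²) + t₂¹UV`, if the product `S₁(T+U,U,V)·S₂(T,U,V)`,
where `S₂` is monic of degree 5 in `T` and symmetric in `(U,V)`, is congruent modulo the ideal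
`(R⁴(U,V), U⁵) ⊆ ℤ[T,U,V]` to a polynomial in `T` and `U` alone plus multiples of `R⁴` and `R⁵`,
then `(t₁, t₂⁰, t₂¹)` is `(0,0,0)` or `(-1,0,0)`. -/
theorem uniform_rank7_splitting_25 (t₁ t₂ t₃ : ℤ) (S₂ : MP)
    (hmonic : ∃ c : Fin 5 → MvPolynomial (Fin 2) ℤ,
      S₂ = T ^ 5 + ∑ i : Fin 5, rename (fun j : Fin 2 => j.succ) (c i) * T ^ (i : ℕ))
    (hsym : rename (Equiv.swap (1 : Fin 3) 2) S₂ = S₂)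
    (h : ∃ (Q : MvPolynomial (Fin 2) ℤ) (A B : MP),
      quad t₁ t₂ t₃ (T + U) * S₂
          - (rename (fun j : Fin 2 => j.castSucc) Q + A * R 4 + B * R 5)
        ∈ Ideal.span {R 4, U ^ 5}) :
    (t₁, t₂, t₃) = (0, 0, 0) ∨ (t₁, t₂, t₃) = (-1, 0, 0) := by
  obtain ⟨Q, A, Bp, hmem⟩ := h
  rw [Ideal.mem_span_pair] at hmem
  obtain ⟨x, y, hxy⟩ := hmem
  have Hid : quad t₁ t₂ t₃ (T + U) * S₂ =
      rename (fun j : Fin 2 => j.castSucc) Q + (A + x) * R 4 + Bp * R 5 + y * U ^ 5 := by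
    linear_combination -hxy
  have hswap : ∀ k a b : ℕ,
      Finsupp.mapDomain (⇑(Equiv.swap (1 : Fin 3) 2)) (e k b a) = e k a b := by
    intro k a b
    rw [e, e, Finsupp.mapDomain_add, Finsupp.mapDomain_add, Finsupp.mapDomain_single,
      Finsupp.mapDomain_single, Finsupp.mapDomain_single, Equiv.swap_apply_left,
      Equiv.swap_apply_right, Equiv.swap_apply_of_ne_of_ne (by decide) (by decide)]
    abel
  have hs : ∀ k a b : ℕ, coeff (e k a b) S₂ = coeff (e k b a) S₂ := by
    intro k a b
    conv_lhs => rw [← hsym]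
    rw [← hswap k a b, coeff_rename_mapDomain _ (Equiv.injective _)]
  have hTi : ∀ i : ℕ, (T : MP) ^ i = monomial (e i 0 0) 1 := by
    intro i; rw [monE]; simp [T]
  have hm : coeff (e 5 0 0) S₂ = 1 := by
    obtain ⟨c, hc⟩ := hmonic
    rw [hc]
    simp only [Fin.sum_univ_five, coeff_add, hTi, coeff_mul_monomial', e_le, e_sub]
    norm_num [coeffC, coeff_monomial, show ((3:Fin 5):ℕ)=3 from rfl, show ((4:Fin 5):ℕ)=4 from rfl]
  have E_0_0_7 := congrArg (coeff (e 0 0 7)) Hid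
  simp only [quadm, R4m, R5m, U5m, add_mul, mul_add, coeff_add, coeff_monomial_mul',
    coeff_mul_monomial', e_le, e_sub, mul_one, one_mul] at E_0_0_7
  norm_num [coeffQ] at E_0_0_7
  have E_0_1_6 := congrArg (coeff (e 0 1 6)) Hid
  simp only [quadm, R4m, R5m, U5m, add_mul, mul_add, coeff_add, coeff_monomial_mul',
    coeff_mul_monomial', e_le, e_sub, mul_one, one_mul] at E_0_1_6
  norm_num [coeffQ] at E_0_1_6
  have E_0_2_5 := congrArg (coeff (e 0 2 5)) Hid
  simp only [quadm, R4m, R5m, U5m, add_mul, mul_add, coeff_add, coeff_monomial_mul',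
    coeff_mul_monomial', e_le, e_sub, mul_one, one_mul] at E_0_2_5
  norm_num [coeffQ] at E_0_2_5
  have E_0_3_4 := congrArg (coeff (e 0 3 4)) Hid
  simp only [quadm, R4m, R5m, U5m, add_mul, mul_add, coeff_add, coeff_monomial_mul',
    coeff_mul_monomial', e_le, e_sub, mul_one, one_mul] at E_0_3_4
  norm_num [coeffQ] at E_0_3_4
  have E_0_4_3 := congrArg (coeff (e 0 4 3)) Hid
  simp only [quadm, R4m, R5m, U5m, add_mul, mul_add, coeff_add, coeff_monomial_mul',
    coeff_mul_monomial', e_le, e_sub, mul_one, one_mul] at E_0_4_3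
  norm_num [coeffQ] at E_0_4_3
  have E_0_5_2 := congrArg (coeff (e 0 5 2)) Hid
  simp only [quadm, R4m, R5m, U5m, add_mul, mul_add, coeff_add, coeff_monomial_mul',
    coeff_mul_monomial', e_le, e_sub, mul_one, one_mul] at E_0_5_2
  norm_num [coeffQ] at E_0_5_2
  have E_0_6_1 := congrArg (coeff (e 0 6 1)) Hid
  simp only [quadm, R4m, R5m, U5m, add_mul, mul_add, coeff_add, coeff_monomial_mul',
    coeff_mul_monomial', e_le, e_sub, mul_one, one_mul] at E_0_6_1
  norm_num [coeffQ] at E_0_6_1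
  have E_1_0_6 := congrArg (coeff (e 1 0 6)) Hid
  simp only [quadm, R4m, R5m, U5m, add_mul, mul_add, coeff_add, coeff_monomial_mul',
    coeff_mul_monomial', e_le, e_sub, mul_one, one_mul] at E_1_0_6
  norm_num [coeffQ] at E_1_0_6
  have E_1_1_5 := congrArg (coeff (e 1 1 5)) Hid
  simp only [quadm, R4m, R5m, U5m, add_mul, mul_add, coeff_add, coeff_monomial_mul',
    coeff_mul_monomial', e_le, e_sub, mul_one, one_mul] at E_1_1_5
  norm_num [coeffQ] at E_1_1_5
  have E_1_2_4 := congrArg (coeff (e 1 2 4)) Hid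
  simp only [quadm, R4m, R5m, U5m, add_mul, mul_add, coeff_add, coeff_monomial_mul',
    coeff_mul_monomial', e_le, e_sub, mul_one, one_mul] at E_1_2_4
  norm_num [coeffQ] at E_1_2_4
  have E_1_3_3 := congrArg (coeff (e 1 3 3)) Hid
  simp only [quadm, R4m, R5m, U5m, add_mul, mul_add, coeff_add, coeff_monomial_mul',
    coeff_mul_monomial', e_le, e_sub, mul_one, one_mul] at E_1_3_3
  norm_num [coeffQ] at E_1_3_3
  have E_1_4_2 := congrArg (coeff (e 1 4 2)) Hid
  simp only [quadm, R4m, R5m, U5m, add_mul, mul_add, coeff_add, coeff_monomial_mul',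
    coeff_mul_monomial', e_le, e_sub, mul_one, one_mul] at E_1_4_2
  norm_num [coeffQ] at E_1_4_2
  have E_1_5_1 := congrArg (coeff (e 1 5 1)) Hid
  simp only [quadm, R4m, R5m, U5m, add_mul, mul_add, coeff_add, coeff_monomial_mul',
    coeff_mul_monomial', e_le, e_sub, mul_one, one_mul] at E_1_5_1
  norm_num [coeffQ] at E_1_5_1
  have E_2_0_5 := congrArg (coeff (e 2 0 5)) Hid
  simp only [quadm, R4m, R5m, U5m, add_mul, mul_add, coeff_add, coeff_monomial_mul',
    coeff_mul_monomial', e_le, e_sub, mul_one, one_mul] at E_2_0_5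
  norm_num [coeffQ] at E_2_0_5
  have E_2_1_4 := congrArg (coeff (e 2 1 4)) Hid
  simp only [quadm, R4m, R5m, U5m, add_mul, mul_add, coeff_add, coeff_monomial_mul',
    coeff_mul_monomial', e_le, e_sub, mul_one, one_mul] at E_2_1_4
  norm_num [coeffQ] at E_2_1_4
  have E_2_2_3 := congrArg (coeff (e 2 2 3)) Hid
  simp only [quadm, R4m, R5m, U5m, add_mul, mul_add, coeff_add, coeff_monomial_mul',
    coeff_mul_monomial', e_le, e_sub, mul_one, one_mul] at E_2_2_3
  norm_num [coeffQ] at E_2_2_3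
  have E_2_3_2 := congrArg (coeff (e 2 3 2)) Hid
  simp only [quadm, R4m, R5m, U5m, add_mul, mul_add, coeff_add, coeff_monomial_mul',
    coeff_mul_monomial', e_le, e_sub, mul_one, one_mul] at E_2_3_2
  norm_num [coeffQ] at E_2_3_2
  have E_2_4_1 := congrArg (coeff (e 2 4 1)) Hid
  simp only [quadm, R4m, R5m, U5m, add_mul, mul_add, coeff_add, coeff_monomial_mul',
    coeff_mul_monomial', e_le, e_sub, mul_one, one_mul] at E_2_4_1
  norm_num [coeffQ] at E_2_4_1
  have E_3_0_4 := congrArg (coeff (e 3 0 4)) Hid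
  simp only [quadm, R4m, R5m, U5m, add_mul, mul_add, coeff_add, coeff_monomial_mul',
    coeff_mul_monomial', e_le, e_sub, mul_one, one_mul] at E_3_0_4
  norm_num [coeffQ] at E_3_0_4
  have E_3_1_3 := congrArg (coeff (e 3 1 3)) Hid
  simp only [quadm, R4m, R5m, U5m, add_mul, mul_add, coeff_add, coeff_monomial_mul',
    coeff_mul_monomial', e_le, e_sub, mul_one, one_mul] at E_3_1_3
  norm_num [coeffQ] at E_3_1_3
  have E_3_2_2 := congrArg (coeff (e 3 2 2)) Hid
  simp only [quadm, R4m, R5m, U5m, add_mul, mul_add, coeff_add, coeff_monomial_mul',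
    coeff_mul_monomial', e_le, e_sub, mul_one, one_mul] at E_3_2_2
  norm_num [coeffQ] at E_3_2_2
  have E_3_3_1 := congrArg (coeff (e 3 3 1)) Hid
  simp only [quadm, R4m, R5m, U5m, add_mul, mul_add, coeff_add, coeff_monomial_mul',
    coeff_mul_monomial', e_le, e_sub, mul_one, one_mul] at E_3_3_1
  norm_num [coeffQ] at E_3_3_1
  have E_4_0_3 := congrArg (coeff (e 4 0 3)) Hid
  simp only [quadm, R4m, R5m, U5m, add_mul, mul_add, coeff_add, coeff_monomial_mul',
    coeff_mul_monomial', e_le, e_sub, mul_one, one_mul] at E_4_0_3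
  norm_num [coeffQ] at E_4_0_3
  have E_4_1_2 := congrArg (coeff (e 4 1 2)) Hid
  simp only [quadm, R4m, R5m, U5m, add_mul, mul_add, coeff_add, coeff_monomial_mul',
    coeff_mul_monomial', e_le, e_sub, mul_one, one_mul] at E_4_1_2
  norm_num [coeffQ] at E_4_1_2
  have E_4_2_1 := congrArg (coeff (e 4 2 1)) Hid
  simp only [quadm, R4m, R5m, U5m, add_mul, mul_add, coeff_add, coeff_monomial_mul',
    coeff_mul_monomial', e_le, e_sub, mul_one, one_mul] at E_4_2_1
  norm_num [coeffQ] at E_4_2_1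
  have E_5_0_2 := congrArg (coeff (e 5 0 2)) Hid
  simp only [quadm, R4m, R5m, U5m, add_mul, mul_add, coeff_add, coeff_monomial_mul',
    coeff_mul_monomial', e_le, e_sub, mul_one, one_mul] at E_5_0_2
  norm_num [coeffQ] at E_5_0_2
  have E_5_1_1 := congrArg (coeff (e 5 1 1)) Hid
  simp only [quadm, R4m, R5m, U5m, add_mul, mul_add, coeff_add, coeff_monomial_mul',
    coeff_mul_monomial', e_le, e_sub, mul_one, one_mul] at E_5_1_1
  norm_num [coeffQ] at E_5_1_1
  have E_6_0_1 := congrArg (coeff (e 6 0 1)) Hid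
  simp only [quadm, R4m, R5m, U5m, add_mul, mul_add, coeff_add, coeff_monomial_mul',
    coeff_mul_monomial', e_le, e_sub, mul_one, one_mul] at E_6_0_1
  norm_num [coeffQ] at E_6_0_1
  have ht2 : (7630 : ℤ) * t₂ = 0 := by
    linear_combination (((1020 : ℤ) + (72237 : ℤ)*t₃ + (42720 : ℤ)*t₃^2 + (-20437 : ℤ)*t₂ + (1889 : ℤ)*t₂*t₃ + (12913 : ℤ)*t₂^2 + (-3671 : ℤ)*t₁ + (-27373 : ℤ)*t₁*t₃ + (3075 : ℤ)*t₁*t₂ + (1382 : ℤ)*t₁^2) * E_0_3_4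
      + ((-1020 : ℤ) + (-72237 : ℤ)*t₃ + (-42720 : ℤ)*t₃^2 + (20437 : ℤ)*t₂ + (-1889 : ℤ)*t₂*t₃ + (-12913 : ℤ)*t₂^2 + (3671 : ℤ)*t₁ + (27373 : ℤ)*t₁*t₃ + (-3075 : ℤ)*t₁*t₂ + (-1382 : ℤ)*t₁^2) * E_0_4_3
      + ((-17518 : ℤ) + (-10843 : ℤ)*t₃ + (24832 : ℤ)*t₂ + (-9414 : ℤ)*t₁ + (79293 : ℤ)*t₁*t₃ + (42720 : ℤ)*t₁*t₃^2 + (-16323 : ℤ)*t₁*t₂ + (1889 : ℤ)*t₁*t₂*t₃ + (12913 : ℤ)*t₁*t₂^2 + (5459 : ℤ)*t₁^2 + (-27373 : ℤ)*t₁^2*t₃ + (3075 : ℤ)*t₁^2*t₂ + (-5921 : ℤ)*t₁^3) * E_1_2_4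
      + ((-5372 : ℤ) + (159080 : ℤ)*t₃ + (85440 : ℤ)*t₃^2 + (-40874 : ℤ)*t₂ + (3778 : ℤ)*t₂*t₃ + (25826 : ℤ)*t₂^2 + (-7233 : ℤ)*t₁ + (-54746 : ℤ)*t₁*t₃ + (6150 : ℤ)*t₁*t₂ + (-4539 : ℤ)*t₁^2) * E_1_3_3
      + ((22890 : ℤ) + (-148237 : ℤ)*t₃ + (-85440 : ℤ)*t₃^2 + (16042 : ℤ)*t₂ + (-3778 : ℤ)*t₂*t₃ + (-25826 : ℤ)*t₂^2 + (16647 : ℤ)*t₁ + (-24547 : ℤ)*t₁*t₃ + (-42720 : ℤ)*t₁*t₃^2 + (10173 : ℤ)*t₁*t₂ + (-1889 : ℤ)*t₁*t₂*t₃ + (-12913 : ℤ)*t₁*t₂^2 + (-920 : ℤ)*t₁^2 + (27373 : ℤ)*t₁^2*t₃ + (-3075 : ℤ)*t₁^2*t₂ + (5921 : ℤ)*t₁^3) * E_1_4_2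
      + ((26386 : ℤ) + (-12378 : ℤ)*t₃ + (-7303 : ℤ)*t₃^2 + (-20787 : ℤ)*t₂ + (108999 : ℤ)*t₂*t₃ + (42720 : ℤ)*t₂*t₃^2 + (-46460 : ℤ)*t₂^2 + (1889 : ℤ)*t₂^2*t₃ + (12913 : ℤ)*t₂^3 + (-2031 : ℤ)*t₁ + (-17899 : ℤ)*t₁*t₃ + (8026 : ℤ)*t₁*t₂ + (-27373 : ℤ)*t₁*t₂*t₃ + (3075 : ℤ)*t₁*t₂^2 + (-12152 : ℤ)*t₁^2 + (-7550 : ℤ)*t₁^2*t₃ + (5496 : ℤ)*t₁^2*t₂ + (16324 : ℤ)*t₁^3) * E_2_1_4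
      + ((-18756 : ℤ) + (-45562 : ℤ)*t₃ + (86596 : ℤ)*t₃^2 + (42720 : ℤ)*t₃^3 + (63370 : ℤ)*t₂ + (-125075 : ℤ)*t₂*t₃ + (-40831 : ℤ)*t₂*t₃^2 + (42346 : ℤ)*t₂^2 + (11024 : ℤ)*t₂^2*t₃ + (-12913 : ℤ)*t₂^3 + (-26064 : ℤ)*t₁ + (58122 : ℤ)*t₁*t₃ + (15347 : ℤ)*t₁*t₃^2 + (7723 : ℤ)*t₁*t₂ + (32337 : ℤ)*t₁*t₂*t₃ + (9838 : ℤ)*t₁*t₂^2 + (8249 : ℤ)*t₁^2 + (-33541 : ℤ)*t₁^2*t₃ + (5807 : ℤ)*t₁^2*t₂ + (10403 : ℤ)*t₁^3) * E_2_2_3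
      + ((-15260 : ℤ) + (96113 : ℤ)*t₃ + (-43876 : ℤ)*t₃^2 + (-42720 : ℤ)*t₃^3 + (-34143 : ℤ)*t₂ + (126964 : ℤ)*t₂*t₃ + (40831 : ℤ)*t₂*t₃^2 + (-29433 : ℤ)*t₂^2 + (-11024 : ℤ)*t₂^2*t₃ + (12913 : ℤ)*t₂^3 + (9957 : ℤ)*t₁ + (-13752 : ℤ)*t₁*t₃ + (27373 : ℤ)*t₁*t₃^2 + (-16857 : ℤ)*t₁*t₂ + (-30448 : ℤ)*t₁*t₂*t₃ + (3075 : ℤ)*t₁*t₂^2 + (7613 : ℤ)*t₁^2 + (6168 : ℤ)*t₁^2*t₃ + (-2732 : ℤ)*t₁^2*t₂ + (-16324 : ℤ)*t₁^3) * E_2_3_2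
      + ((7630 : ℤ) + (-38173 : ℤ)*t₃ + (-35417 : ℤ)*t₃^2 + (-8440 : ℤ)*t₂ + (-110888 : ℤ)*t₂*t₃ + (-42720 : ℤ)*t₂*t₃^2 + (33547 : ℤ)*t₂^2 + (-1889 : ℤ)*t₂^2*t₃ + (-12913 : ℤ)*t₂^3 + (18138 : ℤ)*t₁ + (-26471 : ℤ)*t₁*t₃ + (-42720 : ℤ)*t₁*t₃^2 + (1108 : ℤ)*t₁*t₂ + (25484 : ℤ)*t₁*t₂*t₃ + (-15988 : ℤ)*t₁*t₂^2 + (-3710 : ℤ)*t₁^2 + (34923 : ℤ)*t₁^2*t₃ + (-8571 : ℤ)*t₁^2*t₂ + (-10403 : ℤ)*t₁^3) * E_2_4_1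
      + ((-35254 : ℤ) + (35599 : ℤ)*t₃ + (14606 : ℤ)*t₃^2 + (11370 : ℤ)*t₂ + (-58918 : ℤ)*t₂*t₃ + (52046 : ℤ)*t₂^2 + (-3022 : ℤ)*t₁ + (17899 : ℤ)*t₁*t₃ + (-2567 : ℤ)*t₁*t₂ + (12152 : ℤ)*t₁^2 + (7550 : ℤ)*t₁^2*t₃ + (-11417 : ℤ)*t₁^2*t₂ + (-16324 : ℤ)*t₁^3) * E_3_0_4
      + ((27624 : ℤ) + (-10368 : ℤ)*t₃ + (-47249 : ℤ)*t₃^2 + (-63335 : ℤ)*t₂ + (115874 : ℤ)*t₂*t₃ + (-49671 : ℤ)*t₂^2 + (41223 : ℤ)*t₁ + (-45970 : ℤ)*t₁*t₃ + (-7797 : ℤ)*t₁*t₃^2 + (-625 : ℤ)*t₁*t₂ + (23081 : ℤ)*t₁*t₂*t₃ + (-18720 : ℤ)*t₁*t₂^2 + (-8249 : ℤ)*t₁^2 + (17217 : ℤ)*t₁^2*t₃ + (-10289 : ℤ)*t₁^2*t₂ + (-10403 : ℤ)*t₁^3) * E_3_1_3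
      + ((7630 : ℤ) + (-38617 : ℤ)*t₃ + (14112 : ℤ)*t₃^2 + (46872 : ℤ)*t₂ + (-50196 : ℤ)*t₂*t₃ + (43818 : ℤ)*t₂^2 + (-20063 : ℤ)*t₁ + (-2110 : ℤ)*t₁*t₃ + (11913 : ℤ)*t₁*t₂ + (-7613 : ℤ)*t₁^2 + (-247 : ℤ)*t₁^2*t₃ + (-3189 : ℤ)*t₁^2*t₂ + (16324 : ℤ)*t₁^3) * E_3_2_2
      + ((13386 : ℤ)*t₃ + (18531 : ℤ)*t₃^2 + (5093 : ℤ)*t₂ + (-6760 : ℤ)*t₂*t₃ + (-46193 : ℤ)*t₂^2 + (-18138 : ℤ)*t₁ + (30181 : ℤ)*t₁*t₃ + (7797 : ℤ)*t₁*t₃^2 + (-8721 : ℤ)*t₁*t₂ + (-23081 : ℤ)*t₁*t₂*t₃ + (18720 : ℤ)*t₁*t₂^2 + (3710 : ℤ)*t₁^2 + (-24520 : ℤ)*t₁^2*t₃ + (24895 : ℤ)*t₁^2*t₂ + (10403 : ℤ)*t₁^3) * E_3_3_1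
      + ((-36492 : ℤ) + (32282 : ℤ)*t₃ + (58453 : ℤ)*t₃^2 + (97316 : ℤ)*t₂ + (-127997 : ℤ)*t₂*t₃ + (27769 : ℤ)*t₂^2 + (-64012 : ℤ)*t₁ + (75207 : ℤ)*t₁*t₃ + (14853 : ℤ)*t₁*t₃^2 + (22363 : ℤ)*t₁*t₂ + (-55235 : ℤ)*t₁*t₂*t₃ + (51121 : ℤ)*t₁*t₂^2 + (-1857 : ℤ)*t₁^2 + (-893 : ℤ)*t₁^2*t₃ + (-6035 : ℤ)*t₁^2*t₂ + (10403 : ℤ)*t₁^3) * E_4_0_3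
      + ((-7630 : ℤ) + (37046 : ℤ)*t₃ + (-46587 : ℤ)*t₃^2 + (7056 : ℤ)*t₃^3 + (-13439 : ℤ)*t₂ + (52152 : ℤ)*t₂*t₃ + (-46760 : ℤ)*t₂*t₃^2 + (-74466 : ℤ)*t₂^2 + (105678 : ℤ)*t₂^2*t₃ + (-69841 : ℤ)*t₂^3 + (28931 : ℤ)*t₁ + (-10084 : ℤ)*t₁*t₃ + (-28457 : ℤ)*t₁*t₃^2 + (-29333 : ℤ)*t₁*t₂ + (54557 : ℤ)*t₁*t₂*t₃ + (-26023 : ℤ)*t₁*t₂^2 + (21534 : ℤ)*t₁^2 + (-14250 : ℤ)*t₁^2*t₃ + (332 : ℤ)*t₁^2*t₂ + (-11271 : ℤ)*t₁^3) * E_4_1_2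
      + ((-10508 : ℤ)*t₃ + (10043 : ℤ)*t₃^2 + (-7056 : ℤ)*t₃^3 + (-47908 : ℤ)*t₂ + (16457 : ℤ)*t₂*t₃ + (46760 : ℤ)*t₂*t₃^2 + (75102 : ℤ)*t₂^2 + (-105678 : ℤ)*t₂^2*t₃ + (69841 : ℤ)*t₂^3 + (18138 : ℤ)*t₁ + (-24003 : ℤ)*t₁*t₃ + (20907 : ℤ)*t₁*t₃^2 + (16552 : ℤ)*t₁*t₂ + (-20984 : ℤ)*t₁*t₂*t₃ + (-7303 : ℤ)*t₁*t₂^2 + (-12578 : ℤ)*t₁^2 + (22693 : ℤ)*t₁^2*t₃ + (-22038 : ℤ)*t₁^2*t₂ + (-15456 : ℤ)*t₁^3) * E_4_2_1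
      + ((7630 : ℤ) + (-63099 : ℤ)*t₃ + (76044 : ℤ)*t₃^2 + (14606 : ℤ)*t₃^3 + (45769 : ℤ)*t₂*t₃ + (-58424 : ℤ)*t₂*t₃^2 + (43818 : ℤ)*t₂^2*t₃ + (-28931 : ℤ)*t₁ + (-24028 : ℤ)*t₁*t₃ + (65400 : ℤ)*t₁*t₃^2 + (65302 : ℤ)*t₁*t₂ + (-112977 : ℤ)*t₁*t₂*t₃ + (54428 : ℤ)*t₁*t₂^2 + (-21534 : ℤ)*t₁^2 + (10065 : ℤ)*t₁^2*t₃ + (-6550 : ℤ)*t₁^2*t₂ + (11271 : ℤ)*t₁^3) * E_5_0_2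
      + ((63099 : ℤ)*t₂ + (-76044 : ℤ)*t₂*t₃ + (-14606 : ℤ)*t₂*t₃^2 + (-45769 : ℤ)*t₂^2 + (58424 : ℤ)*t₂^2*t₃ + (-43818 : ℤ)*t₂^3 + (-18138 : ℤ)*t₁ + (36581 : ℤ)*t₁*t₃ + (-43600 : ℤ)*t₁*t₃^2 + (-38086 : ℤ)*t₁*t₂ + (57272 : ℤ)*t₁*t₂*t₃ + (6971 : ℤ)*t₁*t₂^2 + (12578 : ℤ)*t₁^2 + (-7237 : ℤ)*t₁^2*t₃ + (33309 : ℤ)*t₁^2*t₂ + (15456 : ℤ)*t₁^3) * E_5_1_1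
      + ((18138 : ℤ)*t₃ + (-36581 : ℤ)*t₃^2 + (43600 : ℤ)*t₃^3 + (-34168 : ℤ)*t₂ + (138158 : ℤ)*t₂*t₃ + (-108066 : ℤ)*t₂*t₃^2 + (-19533 : ℤ)*t₂^2 + (47582 : ℤ)*t₂^2*t₃ + (-10610 : ℤ)*t₂^3 + (18138 : ℤ)*t₁ + (-49159 : ℤ)*t₁*t₃ + (50837 : ℤ)*t₁*t₃^2 + (59620 : ℤ)*t₁*t₂ + (-100646 : ℤ)*t₁*t₂*t₃ + (-421 : ℤ)*t₁*t₂^2 + (-12578 : ℤ)*t₁^2 + (-8219 : ℤ)*t₁^2*t₃ + (-44580 : ℤ)*t₁^2*t₂ + (-15456 : ℤ)*t₁^3) * E_6_0_1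
      + ((-7630 : ℤ)*t₂) * hm
      + ((-30520 : ℤ) + (201381 : ℤ)*t₃ + (286993 : ℤ)*t₃^2 + (85440 : ℤ)*t₃^3 + (1039 : ℤ)*t₂ + (-212082 : ℤ)*t₂*t₃ + (-81662 : ℤ)*t₂*t₃^2 + (101522 : ℤ)*t₂^2 + (22048 : ℤ)*t₂^2*t₃ + (-25826 : ℤ)*t₂^3 + (-59749 : ℤ)*t₁ + (120569 : ℤ)*t₁*t₃ + (73414 : ℤ)*t₁*t₃^2 + (4577 : ℤ)*t₁*t₂ + (66563 : ℤ)*t₁*t₂*t₃ + (32589 : ℤ)*t₁*t₂^2 + (-18858 : ℤ)*t₁^2 + (-7612 : ℤ)*t₁^2*t₃ + (42720 : ℤ)*t₁^2*t₃^2 + (-5748 : ℤ)*t₁^2*t₂ + (1889 : ℤ)*t₁^2*t₂*t₃ + (12913 : ℤ)*t₁^2*t₂^2 + (11323 : ℤ)*t₁^3 + (-27373 : ℤ)*t₁^3*t₃ + (3075 : ℤ)*t₁^3*t₂ + (-5921 : ℤ)*t₁^4) * (hs 0 3 2)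
      + ((-7630 : ℤ) + (38173 : ℤ)*t₃ + (35417 : ℤ)*t₃^2 + (9460 : ℤ)*t₂ + (183125 : ℤ)*t₂*t₃ + (85440 : ℤ)*t₂*t₃^2 + (-53984 : ℤ)*t₂^2 + (3778 : ℤ)*t₂^2*t₃ + (25826 : ℤ)*t₂^3 + (-41028 : ℤ)*t₁ + (174708 : ℤ)*t₁*t₃ + (128160 : ℤ)*t₁*t₃^2 + (-20821 : ℤ)*t₁*t₂ + (-49079 : ℤ)*t₁*t₂*t₃ + (44889 : ℤ)*t₁*t₂^2 + (-12937 : ℤ)*t₁^2 + (-10376 : ℤ)*t₁^2*t₃ + (42720 : ℤ)*t₁^2*t₃^2 + (-220 : ℤ)*t₁^2*t₂ + (1889 : ℤ)*t₁^2*t₂*t₃ + (12913 : ℤ)*t₁^2*t₂^2 + (11323 : ℤ)*t₁^3 + (-27373 : ℤ)*t₁^3*t₃ + (3075 : ℤ)*t₁^3*t₂ + (-5921 : ℤ)*t₁^4) * (hs 0 4 1)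
      + ((-15260 : ℤ) + (40070 : ℤ)*t₃ + (200540 : ℤ)*t₃^2 + (85440 : ℤ)*t₃^3 + (17159 : ℤ)*t₂ + (53414 : ℤ)*t₂*t₃ + (3778 : ℤ)*t₂*t₃^2 + (19973 : ℤ)*t₂^2 + (25826 : ℤ)*t₂^2*t₃ + (-33398 : ℤ)*t₁ + (96411 : ℤ)*t₁*t₃ + (266923 : ℤ)*t₁*t₃^2 + (85440 : ℤ)*t₁*t₃^3 + (40279 : ℤ)*t₁*t₂ + (4388 : ℤ)*t₁*t₂*t₃ + (3778 : ℤ)*t₁*t₂*t₃^2 + (28818 : ℤ)*t₁*t₂^2 + (25826 : ℤ)*t₁*t₂^2*t₃ + (-41032 : ℤ)*t₁^2 + (20364 : ℤ)*t₁^2*t₃ + (30694 : ℤ)*t₁^2*t₃^2 + (2362 : ℤ)*t₁^2*t₂ + (9928 : ℤ)*t₁^2*t₂*t₃ + (25826 : ℤ)*t₁^2*t₂^2 + (7420 : ℤ)*t₁^3 + (-74385 : ℤ)*t₁^3*t₃ + (14378 : ℤ)*t₁^3*t₂ + (20806 : ℤ)*t₁^4) * (hs 1 3 1)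
      + ((-22890 : ℤ)*t₂ + (148237 : ℤ)*t₂*t₃ + (85440 : ℤ)*t₂*t₃^2 + (-16042 : ℤ)*t₂^2 + (3778 : ℤ)*t₂^2*t₃ + (25826 : ℤ)*t₂^3 + (-7630 : ℤ)*t₁ + (38173 : ℤ)*t₁*t₃ + (35417 : ℤ)*t₁*t₃^2 + (-8207 : ℤ)*t₁*t₂ + (135435 : ℤ)*t₁*t₂*t₃ + (85440 : ℤ)*t₁*t₂*t₃^2 + (-43720 : ℤ)*t₁*t₂^2 + (3778 : ℤ)*t₁*t₂^2*t₃ + (25826 : ℤ)*t₁*t₂^3 + (-18138 : ℤ)*t₁^2 + (26471 : ℤ)*t₁^2*t₃ + (42720 : ℤ)*t₁^2*t₃^2 + (-188 : ℤ)*t₁^2*t₂ + (-52857 : ℤ)*t₁^2*t₂*t₃ + (19063 : ℤ)*t₁^2*t₂^2 + (3710 : ℤ)*t₁^3 + (-34923 : ℤ)*t₁^3*t₃ + (2650 : ℤ)*t₁^3*t₂ + (10403 : ℤ)*t₁^4) * (hs 1 4 0)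
      + ((-7630 : ℤ) + (37169 : ℤ)*t₃ + (-107801 : ℤ)*t₃^2 + (50932 : ℤ)*t₃^3 + (42720 : ℤ)*t₃^4 + (57288 : ℤ)*t₂ + (225829 : ℤ)*t₂*t₃ + (-182183 : ℤ)*t₂*t₃^2 + (-83551 : ℤ)*t₂*t₃^3 + (-71193 : ℤ)*t₂^2 + (372963 : ℤ)*t₂^2*t₃ + (94575 : ℤ)*t₂^2*t₃^2 + (-132821 : ℤ)*t₂^3 + (-22048 : ℤ)*t₂^3*t₃ + (25826 : ℤ)*t₂^4 + (-52554 : ℤ)*t₁*t₃ + (66621 : ℤ)*t₁*t₃^2 + (15347 : ℤ)*t₁*t₃^3 + (-1674 : ℤ)*t₁*t₂ + (67748 : ℤ)*t₁*t₂*t₃ + (59710 : ℤ)*t₁*t₂*t₃^2 + (-24719 : ℤ)*t₁*t₂^2 + (-47983 : ℤ)*t₁*t₂^2*t₃ + (6150 : ℤ)*t₁*t₂^3 + (18974 : ℤ)*t₁^2 + (-4037 : ℤ)*t₁^2*t₃ + (1382 : ℤ)*t₁^2*t₃^2 + (-11163 : ℤ)*t₁^2*t₂ + (29395 : ℤ)*t₁^2*t₂*t₃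 + (-3043 : ℤ)*t₁^2*t₂^2 + (5053 : ℤ)*t₁^3 + (-10403 : ℤ)*t₁^3*t₂) * (hs 2 2 1)
      + ((-7630 : ℤ)*t₃ + (38173 : ℤ)*t₃^2 + (35417 : ℤ)*t₃^3 + (15260 : ℤ)*t₂ + (-87673 : ℤ)*t₂*t₃ + (154764 : ℤ)*t₂*t₃^2 + (85440 : ℤ)*t₂*t₃^3 + (34143 : ℤ)*t₂^2 + (-160511 : ℤ)*t₂^2*t₃ + (-38942 : ℤ)*t₂^2*t₃^2 + (29433 : ℤ)*t₂^3 + (23937 : ℤ)*t₂^3*t₃ + (-12913 : ℤ)*t₂^4 + (-7630 : ℤ)*t₁ + (6649 : ℤ)*t₁*t₃ + (43357 : ℤ)*t₁*t₃^2 + (42720 : ℤ)*t₁*t₃^3 + (-6610 : ℤ)*t₁*t₂ + (130292 : ℤ)*t₁*t₂*t₃ + (-10137 : ℤ)*t₁*t₂*t₃^2 + (29503 : ℤ)*t₁*t₂^2 + (48325 : ℤ)*t₁*t₂^2*t₃ + (9838 : ℤ)*t₁*t₂^3) * (hs 2 3 0)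
      + ((-13386 : ℤ)*t₃^2 + (-18531 : ℤ)*t₃^3 + (-7630 : ℤ)*t₂ + (33524 : ℤ)*t₂*t₃ + (-7352 : ℤ)*t₂*t₃^2 + (-46872 : ℤ)*t₂^2 + (96389 : ℤ)*t₂^2*t₃ + (-43818 : ℤ)*t₂^3 + (15260 : ℤ)*t₁*t₃ + (-58755 : ℤ)*t₁*t₃^2 + (-741 : ℤ)*t₁*t₃^3 + (62878 : ℤ)*t₁*t₂ + (1134 : ℤ)*t₁*t₂*t₃ + (-23679 : ℤ)*t₁*t₂*t₃^2 + (-40822 : ℤ)*t₁*t₂^2 + (86958 : ℤ)*t₁*t₂^2*t₃ + (-69841 : ℤ)*t₁*t₂^3 + (-9888 : ℤ)*t₁^2*t₃ + (-4184 : ℤ)*t₁^2*t₃^2 + (-218 : ℤ)*t₁^2*t₂ + (19417 : ℤ)*t₁^2*t₂*t₃ + (-8228 : ℤ)*t₁^2*t₂^2 + (8868 : ℤ)*t₁^3 + (-8576 : ℤ)*t₁^3*t₃ + (-19181 : ℤ)*t₁^3*t₂ + (5053 : ℤ)*t₁^4) * (hs 3 2 0)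
      + ((10508 : ℤ)*t₃^2 + (-10043 : ℤ)*t₃^3 + (7056 : ℤ)*t₃^4 + (7630 : ℤ)*t₂ + (10862 : ℤ)*t₂*t₃ + (30130 : ℤ)*t₂*t₃^2 + (-53816 : ℤ)*t₂*t₃^3 + (13439 : ℤ)*t₂^2 + (-127254 : ℤ)*t₂^2*t₃ + (152438 : ℤ)*t₂^2*t₃^2 + (74466 : ℤ)*t₂^3 + (-175519 : ℤ)*t₂^3*t₃ + (69841 : ℤ)*t₂^4 + (-7630 : ℤ)*t₁*t₃ + (13960 : ℤ)*t₁*t₃^2 + (-13851 : ℤ)*t₁*t₃^3 + (-44122 : ℤ)*t₁*t₂ + (53119 : ℤ)*t₁*t₂*t₃ + (17287 : ℤ)*t₁*t₂*t₃^2) * (hs 4 1 0))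
  have ht3 : (45780 : ℤ) * t₃ = 0 := by
    linear_combination (((55375 : ℤ) + (936576 : ℤ)*t₃ + (514471 : ℤ)*t₃^2 + (-238144 : ℤ)*t₂ + (56993 : ℤ)*t₂*t₃ + (147439 : ℤ)*t₂^2 + (-12918 : ℤ)*t₁ + (-331621 : ℤ)*t₁*t₃ + (34974 : ℤ)*t₁*t₂ + (13681 : ℤ)*t₁^2) * E_0_3_4
      + ((-55375 : ℤ) + (-936576 : ℤ)*t₃ + (-514471 : ℤ)*t₃^2 + (238144 : ℤ)*t₂ + (-56993 : ℤ)*t₂*t₃ + (-147439 : ℤ)*t₂^2 + (12918 : ℤ)*t₁ + (331621 : ℤ)*t₁*t₃ + (-34974 : ℤ)*t₁*t₂ + (-13681 : ℤ)*t₁^2) * E_0_4_3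
      + ((-201002 : ℤ) + (-143339 : ℤ)*t₃ + (294332 : ℤ)*t₂ + (-101415 : ℤ)*t₁ + (1016236 : ℤ)*t₁*t₃ + (514471 : ℤ)*t₁*t₃^2 + (-195502 : ℤ)*t₁*t₂ + (56993 : ℤ)*t₁*t₂*t₃ + (147439 : ℤ)*t₁*t₂^2 + (103928 : ℤ)*t₁^2 + (-331621 : ℤ)*t₁^2*t₃ + (34974 : ℤ)*t₁^2*t₂ + (-70685 : ℤ)*t₁^3) * E_1_2_4
      + ((17882 : ℤ) + (2041884 : ℤ)*t₃ + (1028942 : ℤ)*t₃^2 + (-476288 : ℤ)*t₂ + (113986 : ℤ)*t₂*t₃ + (294878 : ℤ)*t₂^2 + (-26490 : ℤ)*t₁ + (-663242 : ℤ)*t₁*t₃ + (69948 : ℤ)*t₁*t₂ + (-57004 : ℤ)*t₁^2) * E_1_3_3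
      + ((183120 : ℤ) + (-1898545 : ℤ)*t₃ + (-1028942 : ℤ)*t₃^2 + (181956 : ℤ)*t₂ + (-113986 : ℤ)*t₂*t₃ + (-294878 : ℤ)*t₂^2 + (127905 : ℤ)*t₁ + (-352994 : ℤ)*t₁*t₃ + (-514471 : ℤ)*t₁*t₃^2 + (125554 : ℤ)*t₁*t₂ + (-56993 : ℤ)*t₁*t₂*t₃ + (-147439 : ℤ)*t₁*t₂^2 + (-46924 : ℤ)*t₁^2 + (331621 : ℤ)*t₁^2*t₃ + (-34974 : ℤ)*t₁^2*t₂ + (70685 : ℤ)*t₁^3) * E_1_4_2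
      + ((300849 : ℤ) + (-120500 : ℤ)*t₃ + (-84366 : ℤ)*t₃^2 + (-211642 : ℤ)*t₂ + (1363112 : ℤ)*t₂*t₃ + (514471 : ℤ)*t₂*t₃^2 + (-533884 : ℤ)*t₂^2 + (56993 : ℤ)*t₂^2*t₃ + (147439 : ℤ)*t₂^3 + (9855 : ℤ)*t₁ + (-222999 : ℤ)*t₁*t₃ + (121272 : ℤ)*t₁*t₂ + (-331621 : ℤ)*t₁*t₂*t₃ + (34974 : ℤ)*t₁*t₂^2 + (-180768 : ℤ)*t₁^2 + (-89072 : ℤ)*t₁^2*t₃ + (56323 : ℤ)*t₁^2*t₂ + (201866 : ℤ)*t₁^3) * E_2_1_4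
      + ((-255069 : ℤ) + (-578899 : ℤ)*t₃ + (1100602 : ℤ)*t₃^2 + (514471 : ℤ)*t₃^3 + (748481 : ℤ)*t₂ + (-1553908 : ℤ)*t₂*t₃ + (-457478 : ℤ)*t₂*t₃^2 + (491242 : ℤ)*t₂^2 + (90446 : ℤ)*t₂^2*t₃ + (-147439 : ℤ)*t₂^3 + (-304111 : ℤ)*t₁ + (774187 : ℤ)*t₁*t₃ + (182850 : ℤ)*t₁*t₃^2 + (63093 : ℤ)*t₁*t₂ + (423588 : ℤ)*t₁*t₂*t₃ + (112465 : ℤ)*t₁*t₂^2 + (111345 : ℤ)*t₁^2 + (-407012 : ℤ)*t₁^2*t₃ + (63935 : ℤ)*t₁^2*t₂ + (131181 : ℤ)*t₁^3) * E_2_2_3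
      + ((-91560 : ℤ) + (1228797 : ℤ)*t₃ + (-586131 : ℤ)*t₃^2 + (-514471 : ℤ)*t₃^3 + (-397961 : ℤ)*t₂ + (1610901 : ℤ)*t₂*t₃ + (457478 : ℤ)*t₂*t₃^2 + (-343803 : ℤ)*t₂^2 + (-90446 : ℤ)*t₂^2*t₃ + (147439 : ℤ)*t₂^3 + (125856 : ℤ)*t₁ + (-178644 : ℤ)*t₁*t₃ + (331621 : ℤ)*t₁*t₃^2 + (-180979 : ℤ)*t₁*t₂ + (-366595 : ℤ)*t₁*t₂*t₃ + (34974 : ℤ)*t₁*t₂^2 + (123764 : ℤ)*t₁^2 + (75391 : ℤ)*t₁^2*t₃ + (-28961 : ℤ)*t₁^2*t₂ + (-201866 : ℤ)*t₁^3) * E_2_3_2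
      + ((45780 : ℤ) + (-529398 : ℤ)*t₃ + (-430105 : ℤ)*t₃^2 + (-138878 : ℤ)*t₂ + (-1420105 : ℤ)*t₂*t₃ + (-514471 : ℤ)*t₂*t₃^2 + (386445 : ℤ)*t₂^2 + (-56993 : ℤ)*t₂^2*t₃ + (-147439 : ℤ)*t₂^3 + (168400 : ℤ)*t₁ + (-372544 : ℤ)*t₁*t₃ + (-514471 : ℤ)*t₁*t₃^2 + (-3386 : ℤ)*t₁*t₂ + (274628 : ℤ)*t₁*t₂*t₃ + (-182413 : ℤ)*t₁*t₂^2 + (-54341 : ℤ)*t₁^2 + (420693 : ℤ)*t₁^2*t₃ + (-91297 : ℤ)*t₁^2*t₂ + (-131181 : ℤ)*t₁^3) * E_2_4_1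
      + ((-400696 : ℤ) + (384339 : ℤ)*t₃ + (168732 : ℤ)*t₃^2 + (146834 : ℤ)*t₂ + (-684340 : ℤ)*t₂*t₃ + (591480 : ℤ)*t₂^2 + (-63922 : ℤ)*t₁ + (222999 : ℤ)*t₁*t₃ + (-17344 : ℤ)*t₁*t₂ + (180768 : ℤ)*t₁^2 + (89072 : ℤ)*t₁^2*t₃ + (-127008 : ℤ)*t₁^2*t₂ + (-201866 : ℤ)*t₁^3) * E_3_0_4
      + ((354916 : ℤ) + (-52648 : ℤ)*t₃ + (-565823 : ℤ)*t₃^2 + (-734803 : ℤ)*t₂ + (1348406 : ℤ)*t₂*t₃ + (-554623 : ℤ)*t₂^2 + (466312 : ℤ)*t₁ + (-593419 : ℤ)*t₁*t₃ + (-93778 : ℤ)*t₁*t₃^2 + (-16004 : ℤ)*t₁*t₂ + (258722 : ℤ)*t₁*t₂*t₃ + (-211374 : ℤ)*t₁*t₂^2 + (-111345 : ℤ)*t₁^2 + (205146 : ℤ)*t₁^2*t₃ + (-124431 : ℤ)*t₁^2*t₂ + (-131181 : ℤ)*t₁^3) * E_3_1_3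
      + ((-576931 : ℤ)*t₃ + (159320 : ℤ)*t₃^2 + (631848 : ℤ)*t₂ + (-589644 : ℤ)*t₂*t₃ + (506196 : ℤ)*t₂^2 + (-233990 : ℤ)*t₁ + (-56465 : ℤ)*t₁*t₃ + (153726 : ℤ)*t₁*t₂ + (-123764 : ℤ)*t₁^2 + (-4706 : ℤ)*t₁^2*t₃ + (-41724 : ℤ)*t₁^2*t₂ + (201866 : ℤ)*t₁^3) * E_3_2_2
      + ((45780 : ℤ) + (245240 : ℤ)*t₃ + (237771 : ℤ)*t₃^2 + (-43879 : ℤ)*t₂ + (-74422 : ℤ)*t₂*t₃ + (-543053 : ℤ)*t₂^2 + (-168400 : ℤ)*t₁ + (426885 : ℤ)*t₁*t₃ + (93778 : ℤ)*t₁*t₃^2 + (-120378 : ℤ)*t₁*t₂ + (-258722 : ℤ)*t₁*t₂*t₃ + (211374 : ℤ)*t₁*t₂^2 + (54341 : ℤ)*t₁^2 + (-289512 : ℤ)*t₁^2*t₃ + (293163 : ℤ)*t₁^2*t₂ + (131181 : ℤ)*t₁^3) * E_3_3_1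
      + ((-454763 : ℤ) + (337566 : ℤ)*t₃ + (680942 : ℤ)*t₃^2 + (1067754 : ℤ)*t₂ + (-1442282 : ℤ)*t₂*t₃ + (267484 : ℤ)*t₂^2 + (-720073 : ℤ)*t₁ + (886262 : ℤ)*t₁*t₃ + (173438 : ℤ)*t₁*t₃^2 + (381057 : ℤ)*t₁*t₂ + (-633204 : ℤ)*t₁*t₂*t₃ + (590562 : ℤ)*t₁*t₂^2 + (3211 : ℤ)*t₁^2 + (-3280 : ℤ)*t₁^2*t₃ + (-77435 : ℤ)*t₁^2*t₂ + (131181 : ℤ)*t₁^3) * E_4_0_3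
      + ((433232 : ℤ)*t₃ + (-597424 : ℤ)*t₃^2 + (79660 : ℤ)*t₃^3 + (-115576 : ℤ)*t₂ + (740357 : ℤ)*t₂*t₃ + (-543214 : ℤ)*t₂*t₃^2 + (-958363 : ℤ)*t₂^2 + (1227554 : ℤ)*t₂^2*t₃ + (-801936 : ℤ)*t₂^3 + (333837 : ℤ)*t₁ + (-73420 : ℤ)*t₁*t₃ + (-339544 : ℤ)*t₁*t₃^2 + (-332300 : ℤ)*t₁*t₂ + (636992 : ℤ)*t₁*t₂*t₃ + (-295740 : ℤ)*t₁*t₂^2 + (277678 : ℤ)*t₁^2 + (-164680 : ℤ)*t₁^2*t₃ + (-15159 : ℤ)*t₁^2*t₂ + (-147799 : ℤ)*t₁^3) * E_4_1_2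
      + ((-45780 : ℤ) + (-122620 : ℤ)*t₃ + (169580 : ℤ)*t₃^2 + (-79660 : ℤ)*t₃^3 + (-523523 : ℤ)*t₂ + (46459 : ℤ)*t₂*t₃ + (543214 : ℤ)*t₂*t₃^2 + (989435 : ℤ)*t₂^2 + (-1227554 : ℤ)*t₂^2*t₃ + (801936 : ℤ)*t₂^3 + (168400 : ℤ)*t₁ + (-326004 : ℤ)*t₁*t₃ + (250472 : ℤ)*t₁*t₃^2 + (151274 : ℤ)*t₁*t₂ + (-252180 : ℤ)*t₁*t₂*t₃ + (-84366 : ℤ)*t₁*t₂^2 + (-154188 : ℤ)*t₁^2 + (257032 : ℤ)*t₁^2*t₃ + (-236280 : ℤ)*t₁^2*t₂ + (-185248 : ℤ)*t₁^3) * E_4_2_1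
      + ((-690229 : ℤ)*t₃ + (842936 : ℤ)*t₃^2 + (168732 : ℤ)*t₃^3 + (657135 : ℤ)*t₂*t₃ + (-674928 : ℤ)*t₂*t₃^2 + (506196 : ℤ)*t₂^2*t₃ + (-333837 : ℤ)*t₁ + (-358446 : ℤ)*t₁*t₃ + (761256 : ℤ)*t₁*t₃^2 + (760955 : ℤ)*t₁*t₂ + (-1276545 : ℤ)*t₁*t₂*t₃ + (594296 : ℤ)*t₁*t₂^2 + (-277678 : ℤ)*t₁^2 + (127231 : ℤ)*t₁^2*t₃ + (-78573 : ℤ)*t₁^2*t₂ + (147799 : ℤ)*t₁^3) * E_5_0_2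
      + ((45780 : ℤ) + (690229 : ℤ)*t₂ + (-842936 : ℤ)*t₂*t₃ + (-168732 : ℤ)*t₂*t₃^2 + (-657135 : ℤ)*t₂^2 + (674928 : ℤ)*t₂^2*t₃ + (-506196 : ℤ)*t₂^3 + (-168400 : ℤ)*t₁ + (480192 : ℤ)*t₁*t₃ + (-507504 : ℤ)*t₁*t₃^2 + (-428952 : ℤ)*t₁*t₂ + (653140 : ℤ)*t₁*t₂*t₃ + (99525 : ℤ)*t₁*t₂^2 + (154188 : ℤ)*t₁^2 + (-71784 : ℤ)*t₁^2*t₃ + (384079 : ℤ)*t₁^2*t₂ + (185248 : ℤ)*t₁^3) * E_5_1_1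
      + ((-45780 : ℤ) + (168400 : ℤ)*t₃ + (-480192 : ℤ)*t₃^2 + (507504 : ℤ)*t₃^3 + (-356392 : ℤ)*t₂ + (1630334 : ℤ)*t₂*t₃ + (-1245664 : ℤ)*t₂*t₃^2 + (-103820 : ℤ)*t₂^2 + (502092 : ℤ)*t₂^2*t₃ + (-88100 : ℤ)*t₂^3 + (168400 : ℤ)*t₁ + (-634380 : ℤ)*t₁*t₃ + (579288 : ℤ)*t₁*t₃^2 + (706630 : ℤ)*t₁*t₂ + (-1164450 : ℤ)*t₁*t₂*t₃ + (-20952 : ℤ)*t₁*t₂^2 + (-154188 : ℤ)*t₁^2 + (-113464 : ℤ)*t₁^2*t₃ + (-531878 : ℤ)*t₁^2*t₂ + (-185248 : ℤ)*t₁^3) * E_6_0_1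
      + ((-45780 : ℤ)*t₃) * hm
      + ((-274680 : ℤ) + (2623668 : ℤ)*t₃ + (3580591 : ℤ)*t₃^2 + (1028942 : ℤ)*t₃^3 + (-21326 : ℤ)*t₂ + (-2557649 : ℤ)*t₂*t₃ + (-914956 : ℤ)*t₂*t₃^2 + (1171703 : ℤ)*t₂^2 + (180892 : ℤ)*t₂^2*t₃ + (-294878 : ℤ)*t₂^3 + (-527293 : ℤ)*t₁ + (1664951 : ℤ)*t₁*t₃ + (880171 : ℤ)*t₁*t₃^2 + (-1023 : ℤ)*t₁*t₂ + (904169 : ℤ)*t₁*t₂*t₃ + (372369 : ℤ)*t₁*t₂^2 + (-144249 : ℤ)*t₁^2 + (-40337 : ℤ)*t₁^2*t₃ + (514471 : ℤ)*t₁^2*t₃^2 + (-75300 : ℤ)*t₁^2*t₂ + (56993 : ℤ)*t₁^2*t₂*t₃ + (147439 : ℤ)*t₁^2*t₂^2 + (178105 : ℤ)*t₁^3 + (-331621 : ℤ)*t₁^3*t₃ + (34974 : ℤ)*t₁^3*t₂ + (-70685 : ℤ)*t₁^4) * (hs 0 3 2)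
      + ((-45780 : ℤ) + (529398 : ℤ)*t₃ + (430105 : ℤ)*t₃^2 + (194253 : ℤ)*t₂ + (2356681 : ℤ)*t₂*t₃ + (1028942 : ℤ)*t₂*t₃^2 + (-624589 : ℤ)*t₂^2 + (113986 : ℤ)*t₂^2*t₃ + (294878 : ℤ)*t₂^3 + (-351520 : ℤ)*t₁ + (2271089 : ℤ)*t₁*t₃ + (1543413 : ℤ)*t₁*t₃^2 + (-191488 : ℤ)*t₁*t₂ + (-492263 : ℤ)*t₁*t₂*t₃ + (512265 : ℤ)*t₁*t₂^2 + (-73564 : ℤ)*t₁^2 + (-67699 : ℤ)*t₁^2*t₃ + (514471 : ℤ)*t₁^2*t₃^2 + (-20576 : ℤ)*t₁^2*t₂ + (56993 : ℤ)*t₁^2*t₂*t₃ + (147439 : ℤ)*t₁^2*t₂^2 + (178105 : ℤ)*t₁^3 + (-331621 : ℤ)*t₁^3*t₃ + (34974 : ℤ)*t₁^3*t₂ + (-70685 : ℤ)*t₁^4) * (hs 0 4 1)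
      + ((-137340 : ℤ) + (630436 : ℤ)*t₃ + (2520984 : ℤ)*t₃^2 + (1028942 : ℤ)*t₃^3 + (303753 : ℤ)*t₂ + (690792 : ℤ)*t₂*t₃ + (113986 : ℤ)*t₂*t₃^2 + (246451 : ℤ)*t₂^2 + (294878 : ℤ)*t₂^2*t₃ + (-305740 : ℤ)*t₁ + (1389444 : ℤ)*t₁*t₃ + (3333336 : ℤ)*t₁*t₃^2 + (1028942 : ℤ)*t₁*t₃^3 + (508523 : ℤ)*t₁*t₂ + (170344 : ℤ)*t₁*t₂*t₃ + (113986 : ℤ)*t₁*t₂*t₃^2 + (335740 : ℤ)*t₁*t₂^2 + (294878 : ℤ)*t₁*t₂^2*t₃ + (-367820 : ℤ)*t₁^2 + (399232 : ℤ)*t₁^2*t₃ + (365700 : ℤ)*t₁^2*t₃^2 + (5246 : ℤ)*t₁^2*t₂ + (183934 : ℤ)*t₁^2*t₂*t₃ + (294878 : ℤ)*t₁^2*t₂^2 + (108682 : ℤ)*t₁^3 + (-898390 : ℤ)*t₁^3*t₃ + (155232 : ℤ)*t₁^3*t₂ + (262362 : ℤ)*t₁^4) * (hs 1 3 1)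
      + ((-183120 : ℤ)*t₂ + (1898545 : ℤ)*t₂*t₃ + (1028942 : ℤ)*t₂*t₃^2 + (-181956 : ℤ)*t₂^2 + (113986 : ℤ)*t₂^2*t₃ + (294878 : ℤ)*t₂^3 + (-45780 : ℤ)*t₁ + (529398 : ℤ)*t₁*t₃ + (430105 : ℤ)*t₁*t₃^2 + (10973 : ℤ)*t₁*t₂ + (1773099 : ℤ)*t₁*t₂*t₃ + (1028942 : ℤ)*t₁*t₂*t₃^2 + (-511999 : ℤ)*t₁*t₂^2 + (113986 : ℤ)*t₁*t₂^2*t₃ + (294878 : ℤ)*t₁*t₂^3 + (-168400 : ℤ)*t₁^2 + (372544 : ℤ)*t₁^2*t₃ + (514471 : ℤ)*t₁^2*t₃^2 + (50310 : ℤ)*t₁^2*t₂ + (-606249 : ℤ)*t₁^2*t₂*t₃ + (217387 : ℤ)*t₁^2*t₂^2 + (54341 : ℤ)*t₁^3 + (-420693 : ℤ)*t₁^3*t₃ + (20612 : ℤ)*t₁^3*t₂ + (131181 : ℤ)*t₁^4) * (hs 1 4 0)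
      + ((-91560 : ℤ) + (253098 : ℤ)*t₃ + (-1443814 : ℤ)*t₃^2 + (665791 : ℤ)*t₃^3 + (514471 : ℤ)*t₃^4 + (959448 : ℤ)*t₂ + (3028748 : ℤ)*t₂*t₃ + (-2310141 : ℤ)*t₂*t₃^2 + (-971949 : ℤ)*t₂*t₃^3 + (-899377 : ℤ)*t₂^2 + (4602363 : ℤ)*t₂^2*t₃ + (1062395 : ℤ)*t₂^2*t₃^2 + (-1532184 : ℤ)*t₂^3 + (-180892 : ℤ)*t₂^3*t₃ + (294878 : ℤ)*t₂^4 + (-648786 : ℤ)*t₁*t₃ + (874232 : ℤ)*t₁*t₃^2 + (182850 : ℤ)*t₁*t₃^3 + (177449 : ℤ)*t₁*t₂ + (747602 : ℤ)*t₁*t₂*t₃ + (755209 : ℤ)*t₁*t₂*t₃^2 + (-221461 : ℤ)*t₁*t₂^2 + (-585751 : ℤ)*t₁*t₂^2*t₃ + (69948 : ℤ)*t₁*t₂^3 + (207981 : ℤ)*t₁^2 + (-41697 : ℤ)*t₁^2*t₃ + (13681 : ℤ)*t₁^2*t₃^2 + (-164736 : ℤ)*t₁^2*t₂ + (365969 :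 ℤ)*t₁^2*t₂*t₃ + (-36573 : ℤ)*t₁^2*t₂^2 + (54067 : ℤ)*t₁^3 + (-131181 : ℤ)*t₁^3*t₂) * (hs 2 2 1)
      + ((-45780 : ℤ)*t₃ + (529398 : ℤ)*t₃^2 + (430105 : ℤ)*t₃^3 + (91560 : ℤ)*t₂ + (-1089919 : ℤ)*t₂*t₃ + (2006236 : ℤ)*t₂*t₃^2 + (1028942 : ℤ)*t₂*t₃^3 + (397961 : ℤ)*t₂^2 + (-1997346 : ℤ)*t₂^2*t₃ + (-400485 : ℤ)*t₂^2*t₃^2 + (343803 : ℤ)*t₂^3 + (237885 : ℤ)*t₂^3*t₃ + (-147439 : ℤ)*t₂^4 + (-91560 : ℤ)*t₁ + (115758 : ℤ)*t₁*t₃ + (564878 : ℤ)*t₁*t₃^2 + (514471 : ℤ)*t₁*t₃^3 + (56901 : ℤ)*t₁*t₂ + (1676557 : ℤ)*t₁*t₂*t₃ + (-91778 : ℤ)*t₁*t₂*t₃^2 + (337587 : ℤ)*t₁*t₂^2 + (606001 : ℤ)*t₁*t₂^2*t₃ + (112465 : ℤ)*t₁*t₂^3) * (hs 2 3 0)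
      + ((-45780 : ℤ)*t₃ + (-245240 : ℤ)*t₃^2 + (-237771 : ℤ)*t₃^3 + (620810 : ℤ)*t₂*t₃ + (-84898 : ℤ)*t₂*t₃^2 + (-631848 : ℤ)*t₂^2 + (1132697 : ℤ)*t₂^2*t₃ + (-506196 : ℤ)*t₂^3 + (45780 : ℤ)*t₁*t₃ + (-834236 : ℤ)*t₁*t₃^2 + (-14118 : ℤ)*t₁*t₃^3 + (801392 : ℤ)*t₁*t₂ + (204806 : ℤ)*t₁*t₂*t₃ + (-284492 : ℤ)*t₁*t₂*t₃^2 + (-600108 : ℤ)*t₁*t₂^2 + (1016180 : ℤ)*t₁*t₂^2*t₃ + (-801936 : ℤ)*t₁*t₂^3 + (-155222 : ℤ)*t₁^2*t₃ + (-54738 : ℤ)*t₁^2*t₃^2 + (92868 : ℤ)*t₁^2*t₂ + (222445 : ℤ)*t₁^2*t₂*t₃ + (-85284 : ℤ)*t₁^2*t₂^2 + (99847 : ℤ)*t₁^3 + (-98701 : ℤ)*t₁^3*t₃ + (-258749 : ℤ)*t₁^3*t₂ + (54067 : ℤ)*t₁^4) * (hs 3 2 0)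
      + ((45780 : ℤ)*t₃ + (122620 : ℤ)*t₃^2 + (-169580 : ℤ)*t₃^3 + (79660 : ℤ)*t₃^4 + (90291 : ℤ)*t₂*t₃ + (550965 : ℤ)*t₂*t₃^2 + (-622874 : ℤ)*t₂*t₃^3 + (115576 : ℤ)*t₂^2 + (-1729792 : ℤ)*t₂^2*t₃ + (1770768 : ℤ)*t₂^2*t₃^2 + (958363 : ℤ)*t₂^3 + (-2029490 : ℤ)*t₂^3*t₃ + (801936 : ℤ)*t₂^4 + (-45780 : ℤ)*t₁*t₃ + (156424 : ℤ)*t₁*t₃^2 + (-170812 : ℤ)*t₁*t₃^3 + (-500543 : ℤ)*t₁*t₂ + (718623 : ℤ)*t₁*t₂*t₃ + (217242 : ℤ)*t₁*t₂*t₃^2) * (hs 4 1 0))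
  have ht1 : (22890 : ℤ) * (t₁^2 + t₁) = 0 := by
    linear_combination (((49255 : ℤ) + (503154 : ℤ)*t₃ + (258151 : ℤ)*t₃^2 + (-115522 : ℤ)*t₂ + (45659 : ℤ)*t₂*t₃ + (69961 : ℤ)*t₂^2 + (9108 : ℤ)*t₁ + (-167383 : ℤ)*t₁*t₃ + (16524 : ℤ)*t₁*t₂ + (5389 : ℤ)*t₁^2) * E_0_3_4
      + ((-49255 : ℤ) + (-503154 : ℤ)*t₃ + (-258151 : ℤ)*t₃^2 + (115522 : ℤ)*t₂ + (-45659 : ℤ)*t₂*t₃ + (-69961 : ℤ)*t₂^2 + (-9108 : ℤ)*t₁ + (167383 : ℤ)*t₁*t₃ + (-16524 : ℤ)*t₁*t₂ + (-5389 : ℤ)*t₁^2) * E_0_4_3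
      + ((-95894 : ℤ) + (-78281 : ℤ)*t₃ + (145340 : ℤ)*t₂ + (-44931 : ℤ)*t₁ + (540478 : ℤ)*t₁*t₃ + (258151 : ℤ)*t₁*t₃^2 + (-97564 : ℤ)*t₁*t₂ + (45659 : ℤ)*t₁*t₂*t₃ + (69961 : ℤ)*t₁*t₂^2 + (71174 : ℤ)*t₁^2 + (-167383 : ℤ)*t₁^2*t₃ + (16524 : ℤ)*t₁^2*t₂ + (-35159 : ℤ)*t₁^3) * E_1_2_4
      + ((50114 : ℤ) + (1087404 : ℤ)*t₃ + (516302 : ℤ)*t₃^2 + (-231044 : ℤ)*t₂ + (91318 : ℤ)*t₂*t₃ + (139922 : ℤ)*t₂^2 + (16908 : ℤ)*t₁ + (-334766 : ℤ)*t₁*t₃ + (33048 : ℤ)*t₁*t₂ + (-29770 : ℤ)*t₁^2) * E_1_3_3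
      + ((45780 : ℤ) + (-1009123 : ℤ)*t₃ + (-516302 : ℤ)*t₃^2 + (85704 : ℤ)*t₂ + (-91318 : ℤ)*t₂*t₃ + (-139922 : ℤ)*t₂^2 + (28023 : ℤ)*t₁ + (-205712 : ℤ)*t₁*t₃ + (-258151 : ℤ)*t₁*t₃^2 + (64516 : ℤ)*t₁*t₂ + (-45659 : ℤ)*t₁*t₂*t₃ + (-69961 : ℤ)*t₁*t₂^2 + (-41404 : ℤ)*t₁^2 + (167383 : ℤ)*t₁^2*t₃ + (-16524 : ℤ)*t₁^2*t₂ + (35159 : ℤ)*t₁^3) * E_1_4_2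
      + ((142533 : ℤ) + (-46232 : ℤ)*t₃ + (-40548 : ℤ)*t₃^2 + (-86920 : ℤ)*t₂ + (709118 : ℤ)*t₂*t₃ + (258151 : ℤ)*t₂*t₃^2 + (-255124 : ℤ)*t₂^2 + (45659 : ℤ)*t₂^2*t₃ + (69961 : ℤ)*t₂^3 + (22041 : ℤ)*t₁ + (-115605 : ℤ)*t₁*t₃ + (73116 : ℤ)*t₁*t₂ + (-167383 : ℤ)*t₁*t₂*t₃ + (16524 : ℤ)*t₁*t₂^2 + (-107856 : ℤ)*t₁^2 + (-43772 : ℤ)*t₁^2*t₃ + (23347 : ℤ)*t₁^2*t₂ + (103922 : ℤ)*t₁^3) * E_2_1_4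
      + ((-142533 : ℤ) + (-305527 : ℤ)*t₃ + (581026 : ℤ)*t₃^2 + (258151 : ℤ)*t₃^3 + (368261 : ℤ)*t₂ + (-803458 : ℤ)*t₂*t₃ + (-212492 : ℤ)*t₂*t₃^2 + (237166 : ℤ)*t₂^2 + (24302 : ℤ)*t₂^2*t₃ + (-69961 : ℤ)*t₂^3 + (-147727 : ℤ)*t₁ + (425455 : ℤ)*t₁*t₃ + (90768 : ℤ)*t₁*t₃^2 + (16755 : ℤ)*t₁*t₂ + (229566 : ℤ)*t₁*t₂*t₃ + (53437 : ℤ)*t₁*t₂^2 + (61851 : ℤ)*t₁^2 + (-205766 : ℤ)*t₁^2*t₃ + (29093 : ℤ)*t₁^2*t₂ + (68763 : ℤ)*t₁^3) * E_2_2_3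
      + ((652119 : ℤ)*t₃ + (-322875 : ℤ)*t₃^2 + (-258151 : ℤ)*t₃^3 + (-193103 : ℤ)*t₂ + (849117 : ℤ)*t₂*t₃ + (212492 : ℤ)*t₂*t₃^2 + (-167205 : ℤ)*t₂^2 + (-24302 : ℤ)*t₂^2*t₃ + (69961 : ℤ)*t₂^3 + (66114 : ℤ)*t₁ + (-96132 : ℤ)*t₁*t₃ + (167383 : ℤ)*t₁*t₃^2 + (-79837 : ℤ)*t₁*t₂ + (-183907 : ℤ)*t₁*t₂*t₃ + (16524 : ℤ)*t₁*t₂^2 + (78086 : ℤ)*t₁^2 + (38383 : ℤ)*t₁^2*t₃ + (-12569 : ℤ)*t₁^2*t₂ + (-103922 : ℤ)*t₁^3) * E_2_3_2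
      + ((-300360 : ℤ)*t₃ + (-217603 : ℤ)*t₃^2 + (-88238 : ℤ)*t₂ + (-754777 : ℤ)*t₂*t₃ + (-258151 : ℤ)*t₂*t₃^2 + (185163 : ℤ)*t₂^2 + (-45659 : ℤ)*t₂^2*t₃ + (-69961 : ℤ)*t₂^3 + (59572 : ℤ)*t₁ + (-213718 : ℤ)*t₁*t₃ + (-258151 : ℤ)*t₁*t₃^2 + (-10034 : ℤ)*t₁*t₂ + (121724 : ℤ)*t₁*t₂*t₃ + (-86485 : ℤ)*t₁*t₂^2 + (-32081 : ℤ)*t₁^2 + (211155 : ℤ)*t₁^2*t₃ + (-39871 : ℤ)*t₁^2*t₂ + (-68763 : ℤ)*t₁^3) * E_2_4_1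
      + ((-189172 : ℤ) + (170745 : ℤ)*t₃ + (81096 : ℤ)*t₃^2 + (78614 : ℤ)*t₂ + (-330832 : ℤ)*t₂*t₃ + (279204 : ℤ)*t₂^2 + (-45790 : ℤ)*t₁ + (115605 : ℤ)*t₁*t₃ + (-1942 : ℤ)*t₁*t₂ + (107856 : ℤ)*t₁^2 + (43772 : ℤ)*t₁^2*t₃ + (-58506 : ℤ)*t₁^2*t₂ + (-103922 : ℤ)*t₁^3) * E_3_0_4
      + ((189172 : ℤ) + (9560 : ℤ)*t₃ + (-282329 : ℤ)*t₃^2 + (-354793 : ℤ)*t₂ + (653162 : ℤ)*t₂*t₃ + (-256597 : ℤ)*t₂^2 + (218974 : ℤ)*t₁ + (-317599 : ℤ)*t₁*t₃ + (-46996 : ℤ)*t₁*t₃^2 + (-12254 : ℤ)*t₁*t₂ + (120236 : ℤ)*t₁*t₂*t₃ + (-99054 : ℤ)*t₁*t₂^2 + (-61851 : ℤ)*t₁^2 + (101844 : ℤ)*t₁^2*t₃ + (-62697 : ℤ)*t₁^2*t₂ + (-68763 : ℤ)*t₁^3) * E_3_1_3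
      + ((-45780 : ℤ) + (-345229 : ℤ)*t₃ + (74648 : ℤ)*t₃^2 + (350616 : ℤ)*t₂ + (-288468 : ℤ)*t₂*t₃ + (243288 : ℤ)*t₂^2 + (-113612 : ℤ)*t₁ + (-43805 : ℤ)*t₁*t₃ + (82248 : ℤ)*t₁*t₂ + (-78086 : ℤ)*t₁^2 + (-3224 : ℤ)*t₁^2*t₃ + (-22590 : ℤ)*t₁^2*t₂ + (103922 : ℤ)*t₁^3) * E_3_2_2
      + ((45780 : ℤ) + (164924 : ℤ)*t₃ + (126585 : ℤ)*t₃^2 + (-74437 : ℤ)*t₂ + (-33862 : ℤ)*t₂*t₃ + (-265895 : ℤ)*t₂^2 + (-59572 : ℤ)*t₁ + (245799 : ℤ)*t₁*t₃ + (46996 : ℤ)*t₁*t₃^2 + (-68052 : ℤ)*t₁*t₂ + (-120236 : ℤ)*t₁*t₂*t₃ + (99054 : ℤ)*t₁*t₂^2 + (32081 : ℤ)*t₁^2 + (-142392 : ℤ)*t₁^2*t₃ + (143793 : ℤ)*t₁^2*t₂ + (68763 : ℤ)*t₁^3) * E_3_3_1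
      + ((-235811 : ℤ) + (143874 : ℤ)*t₃ + (330224 : ℤ)*t₃^2 + (483858 : ℤ)*t₂ + (-674300 : ℤ)*t₂*t₃ + (100870 : ℤ)*t₂^2 + (-336001 : ℤ)*t₁ + (435020 : ℤ)*t₁*t₃ + (84320 : ℤ)*t₁*t₃^2 + (246879 : ℤ)*t₁*t₂ + (-301794 : ℤ)*t₁*t₂*t₃ + (283836 : ℤ)*t₁*t₂^2 + (14353 : ℤ)*t₁^2 + (2078 : ℤ)*t₁^2*t₃ + (-41225 : ℤ)*t₁^2*t₂ + (68763 : ℤ)*t₁^3) * E_4_0_3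
      + ((22890 : ℤ) + (210956 : ℤ)*t₃ + (-317902 : ℤ)*t₃^2 + (37324 : ℤ)*t₃^3 + (-34942 : ℤ)*t₂ + (427445 : ℤ)*t₂*t₃ + (-262654 : ℤ)*t₂*t₃^2 + (-511567 : ℤ)*t₂^2 + (593486 : ℤ)*t₂^2*t₃ + (-382890 : ℤ)*t₂^3 + (160251 : ℤ)*t₁ + (-12916 : ℤ)*t₁*t₃ + (-168802 : ℤ)*t₁*t₃^2 + (-156302 : ℤ)*t₁*t₂ + (309650 : ℤ)*t₁*t₂*t₃ + (-139602 : ℤ)*t₁*t₂^2 + (148474 : ℤ)*t₁^2 + (-79180 : ℤ)*t₁^2*t₃ + (-17151 : ℤ)*t₁^2*t₂ + (-80173 : ℤ)*t₁^3) * E_4_1_2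
      + ((-22890 : ℤ) + (-59572 : ℤ)*t₃ + (109322 : ℤ)*t₃^2 + (-37324 : ℤ)*t₃^3 + (-236075 : ℤ)*t₂ + (-52283 : ℤ)*t₂*t₃ + (262654 : ℤ)*t₂*t₃^2 + (538823 : ℤ)*t₂^2 + (-593486 : ℤ)*t₂^2*t₃ + (382890 : ℤ)*t₂^3 + (59572 : ℤ)*t₁ + (-181986 : ℤ)*t₁*t₃ + (125030 : ℤ)*t₁*t₃^2 + (51962 : ℤ)*t₁*t₂ + (-126276 : ℤ)*t₁*t₂*t₃ + (-40548 : ℤ)*t₁*t₂^2 + (-78720 : ℤ)*t₁^2 + (120874 : ℤ)*t₁^2*t₃ + (-104052 : ℤ)*t₁^2*t₂ + (-92512 : ℤ)*t₁^3) * E_4_2_1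
      + ((-311635 : ℤ)*t₃ + (386672 : ℤ)*t₃^2 + (81096 : ℤ)*t₃^3 + (382521 : ℤ)*t₂*t₃ + (-324384 : ℤ)*t₂*t₃^2 + (243288 : ℤ)*t₂^2*t₃ + (-160251 : ℤ)*t₁ + (-214278 : ℤ)*t₁*t₃ + (368856 : ℤ)*t₁*t₃^2 + (369143 : ℤ)*t₁*t₂ + (-598683 : ℤ)*t₁*t₂*t₃ + (267728 : ℤ)*t₁*t₂^2 + (-148474 : ℤ)*t₁^2 + (66841 : ℤ)*t₁^2*t₃ + (-39273 : ℤ)*t₁^2*t₂ + (80173 : ℤ)*t₁^3) * E_5_0_2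
      + ((311635 : ℤ)*t₂ + (-386672 : ℤ)*t₂*t₃ + (-81096 : ℤ)*t₂*t₃^2 + (-382521 : ℤ)*t₂^2 + (324384 : ℤ)*t₂^2*t₃ + (-243288 : ℤ)*t₂^3 + (-59572 : ℤ)*t₁ + (260706 : ℤ)*t₁*t₃ + (-245904 : ℤ)*t₁*t₃^2 + (-200436 : ℤ)*t₁*t₂ + (309508 : ℤ)*t₁*t₂*t₃ + (57699 : ℤ)*t₁*t₂^2 + (78720 : ℤ)*t₁^2 + (-28362 : ℤ)*t₁^2*t₃ + (184225 : ℤ)*t₁^2*t₂ + (92512 : ℤ)*t₁^3) * E_5_1_1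
      + ((22890 : ℤ) + (59572 : ℤ)*t₃ + (-260706 : ℤ)*t₃^2 + (245904 : ℤ)*t₃^3 + (-151384 : ℤ)*t₂ + (801386 : ℤ)*t₂*t₃ + (-597268 : ℤ)*t₂*t₃^2 + (13378 : ℤ)*t₂^2 + (216600 : ℤ)*t₂^2*t₃ + (-24440 : ℤ)*t₂^3 + (82462 : ℤ)*t₁ + (-339426 : ℤ)*t₁*t₃ + (274266 : ℤ)*t₁*t₃^2 + (348910 : ℤ)*t₁*t₂ + (-560574 : ℤ)*t₁*t₂*t₃ + (-18426 : ℤ)*t₁*t₂^2 + (-78720 : ℤ)*t₁^2 + (-64150 : ℤ)*t₁^2*t₃ + (-264398 : ℤ)*t₁^2*t₂ + (-92512 : ℤ)*t₁^3) * E_6_0_1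
      + ((-22890 : ℤ)*t₁ + (-22890 : ℤ)*t₁^2) * hm
      + ((-91560 : ℤ) + (1415382 : ℤ)*t₃ + (1858633 : ℤ)*t₃^2 + (516302 : ℤ)*t₃^3 + (-27560 : ℤ)*t₂ + (-1285157 : ℤ)*t₂*t₃ + (-424984 : ℤ)*t₂*t₃^2 + (562571 : ℤ)*t₂^2 + (48604 : ℤ)*t₂^2*t₃ + (-139922 : ℤ)*t₂^3 + (-168799 : ℤ)*t₁ + (941537 : ℤ)*t₁*t₃ + (439687 : ℤ)*t₁*t₃^2 + (-28485 : ℤ)*t₁*t₂ + (504791 : ℤ)*t₁*t₂*t₃ + (176835 : ℤ)*t₁*t₂^2 + (-31101 : ℤ)*t₁^2 + (5335 : ℤ)*t₁^2*t₃ + (258151 : ℤ)*t₁^2*t₃^2 + (-40812 : ℤ)*t₁^2*t₂ + (45659 : ℤ)*t₁^2*t₂*t₃ + (69961 : ℤ)*t₁^2*t₂^2 + (110167 : ℤ)*t₁^3 + (-167383 : ℤ)*t₁^3*t₃ + (16524 : ℤ)*t₁^3*t₂ + (-35159 : ℤ)*t₁^4) * (hs 0 3 2)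
      + ((300360 : ℤ)*t₃ + (217603 : ℤ)*t₃^2 + (137493 : ℤ)*t₂ + (1257931 : ℤ)*t₂*t₃ + (516302 : ℤ)*t₂*t₃^2 + (-300685 : ℤ)*t₂^2 + (91318 : ℤ)*t₂^2*t₃ + (139922 : ℤ)*t₂^3 + (-105352 : ℤ)*t₁ + (1222841 : ℤ)*t₁*t₃ + (774453 : ℤ)*t₁*t₃^2 + (-66562 : ℤ)*t₁*t₂ + (-197789 : ℤ)*t₁*t₂*t₃ + (242931 : ℤ)*t₁*t₂^2 + (4058 : ℤ)*t₁^2 + (-5443 : ℤ)*t₁^2*t₃ + (258151 : ℤ)*t₁^2*t₃^2 + (-19256 : ℤ)*t₁^2*t₂ + (45659 : ℤ)*t₁^2*t₂*t₃ + (69961 : ℤ)*t₁^2*t₂^2 + (110167 : ℤ)*t₁^3 + (-167383 : ℤ)*t₁^3*t₃ + (16524 : ℤ)*t₁^3*t₂ + (-35159 : ℤ)*t₁^4) * (hs 0 4 1)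
      + ((-45780 : ℤ) + (390016 : ℤ)*t₃ + (1317744 : ℤ)*t₃^2 + (516302 : ℤ)*t₃^3 + (200799 : ℤ)*t₂ + (370308 : ℤ)*t₂*t₃ + (91318 : ℤ)*t₂*t₃^2 + (126613 : ℤ)*t₂^2 + (139922 : ℤ)*t₂^2*t₃ + (-105352 : ℤ)*t₁ + (810978 : ℤ)*t₁*t₃ + (1731798 : ℤ)*t₁*t₃^2 + (516302 : ℤ)*t₁*t₃^3 + (266849 : ℤ)*t₁*t₂ + (144016 : ℤ)*t₁*t₂*t₃ + (91318 : ℤ)*t₁*t₂*t₃^2 + (162832 : ℤ)*t₁*t₂^2 + (139922 : ℤ)*t₁*t₂^2*t₃ + (-121628 : ℤ)*t₁^2 + (277048 : ℤ)*t₁^2*t₃ + (181536 : ℤ)*t₁^2*t₃^2 + (-8926 : ℤ)*t₁^2*t₂ + (124366 : ℤ)*t₁^2*t₂*t₃ + (139922 : ℤ)*t₁^2*t₂^2 + (64162 : ℤ)*t₁^3 + (-452080 : ℤ)*t₁^3*t₃ + (68964 : ℤ)*t₁^3*t₂ + (137526 : ℤ)*t₁^4) * (hs 1 3 1)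
      + ((-45780 : ℤ)*t₂ + (1009123 : ℤ)*t₂*t₃ + (516302 : ℤ)*t₂*t₃^2 + (-85704 : ℤ)*t₂^2 + (91318 : ℤ)*t₂^2*t₃ + (139922 : ℤ)*t₂^3 + (300360 : ℤ)*t₁*t₃ + (217603 : ℤ)*t₁*t₃^2 + (60215 : ℤ)*t₁*t₂ + (960489 : ℤ)*t₁*t₂*t₃ + (516302 : ℤ)*t₁*t₂*t₃^2 + (-249679 : ℤ)*t₁*t₂^2 + (91318 : ℤ)*t₁*t₂^2*t₃ + (139922 : ℤ)*t₁*t₂^3 + (-59572 : ℤ)*t₁^2 + (213718 : ℤ)*t₁^2*t₃ + (258151 : ℤ)*t₁^2*t₃^2 + (51438 : ℤ)*t₁^2*t₂ + (-289107 : ℤ)*t₁^2*t₂*t₃ + (103009 : ℤ)*t₁^2*t₂^2 + (32081 : ℤ)*t₁^3 + (-211155 : ℤ)*t₁^3*t₃ + (4712 : ℤ)*t₁^3*t₂ + (68763 : ℤ)*t₁^4) * (hs 1 4 0)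
      + ((-68670 : ℤ) + (30084 : ℤ)*t₃ + (-797008 : ℤ)*t₃^2 + (360199 : ℤ)*t₃^3 + (258151 : ℤ)*t₃^4 + (615720 : ℤ)*t₂ + (1673774 : ℤ)*t₂*t₃ + (-1217043 : ℤ)*t₂*t₃^2 + (-470643 : ℤ)*t₂*t₃^3 + (-472219 : ℤ)*t₂^2 + (2364585 : ℤ)*t₂^2*t₃ + (494945 : ℤ)*t₂^2*t₃^2 + (-735258 : ℤ)*t₂^3 + (-48604 : ℤ)*t₂^3*t₃ + (139922 : ℤ)*t₂^4 + (-333462 : ℤ)*t₁*t₃ + (474506 : ℤ)*t₁*t₃^2 + (90768 : ℤ)*t₁*t₃^3 + (187493 : ℤ)*t₁*t₂ + (341114 : ℤ)*t₁*t₂*t₃ + (396949 : ℤ)*t₁*t₂*t₃^2 + (-73147 : ℤ)*t₁*t₂^2 + (-297853 : ℤ)*t₁*t₂^2*t₃ + (33048 : ℤ)*t₁*t₂^3 + (94137 : ℤ)*t₁^2 + (-17475 : ℤ)*t₁^2*t₃ + (5389 : ℤ)*t₁^2*t₃^2 + (-97758 : ℤ)*t₁^2*t₂ + (189599 : ℤ)*t₁^2*t₂*t₃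 + (-18315 : ℤ)*t₁^2*t₂^2 + (23749 : ℤ)*t₁^3 + (-68763 : ℤ)*t₁^3*t₂) * (hs 2 2 1)
      + ((300360 : ℤ)*t₃^2 + (217603 : ℤ)*t₃^3 + (-563881 : ℤ)*t₂*t₃ + (1077652 : ℤ)*t₂*t₃^2 + (516302 : ℤ)*t₂*t₃^3 + (193103 : ℤ)*t₂^2 + (-1034280 : ℤ)*t₂^2*t₃ + (-166833 : ℤ)*t₂^2*t₃^2 + (167205 : ℤ)*t₂^3 + (94263 : ℤ)*t₂^3*t₃ + (-69961 : ℤ)*t₂^4 + (-45780 : ℤ)*t₁ + (75864 : ℤ)*t₁*t₃ + (304736 : ℤ)*t₁*t₃^2 + (258151 : ℤ)*t₁*t₃^3 + (96561 : ℤ)*t₁*t₂ + (894805 : ℤ)*t₁*t₂*t₃ + (-30956 : ℤ)*t₁*t₂*t₃^2 + (160569 : ℤ)*t₁*t₂^2 + (316051 : ℤ)*t₁*t₂^2*t₃ + (53437 : ℤ)*t₁*t₂^3) * (hs 2 3 0)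
      + ((-45780 : ℤ)*t₃ + (-164924 : ℤ)*t₃^2 + (-126585 : ℤ)*t₃^3 + (45780 : ℤ)*t₂ + (419666 : ℤ)*t₂*t₃ + (-40786 : ℤ)*t₂*t₃^2 + (-350616 : ℤ)*t₂^2 + (554363 : ℤ)*t₂^2*t₃ + (-243288 : ℤ)*t₂^3 + (-22890 : ℤ)*t₁ + (-45780 : ℤ)*t₁*t₃ + (-481706 : ℤ)*t₁*t₃^2 + (-9672 : ℤ)*t₁*t₃^3 + (424124 : ℤ)*t₁*t₂ + (198002 : ℤ)*t₁*t₂*t₃ + (-142418 : ℤ)*t₁*t₂*t₃^2 + (-355176 : ℤ)*t₁*t₂^2 + (494432 : ℤ)*t₁*t₂^2*t₃ + (-382890 : ℤ)*t₁*t₂^3 + (-95894 : ℤ)*t₁^2*t₃ + (-29634 : ℤ)*t₁^2*t₃^2 + (94176 : ℤ)*t₁^2*t₂ + (105943 : ℤ)*t₁^2*t₂*t₃ + (-35916 : ℤ)*t₁^2*t₂^2 + (46639 : ℤ)*t₁^3 + (-47245 : ℤ)*t₁^3*t₃ + (-143663 : ℤ)*t₁^3*t₂ + (23749 : ℤ)*t₁^4)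 * (hs 3 2 0)
      + ((22890 : ℤ)*t₃ + (59572 : ℤ)*t₃^2 + (-109322 : ℤ)*t₃^3 + (37324 : ℤ)*t₃^4 + (-22890 : ℤ)*t₂ + (25119 : ℤ)*t₂*t₃ + (370185 : ℤ)*t₂*t₃^2 + (-299978 : ℤ)*t₂*t₃^3 + (34942 : ℤ)*t₂^2 + (-966268 : ℤ)*t₂^2*t₃ + (856140 : ℤ)*t₂^2*t₃^2 + (511567 : ℤ)*t₂^3 + (-976376 : ℤ)*t₂^3*t₃ + (382890 : ℤ)*t₂^4 + (22890 : ℤ)*t₁ + (72664 : ℤ)*t₁*t₃^2 + (-87706 : ℤ)*t₁*t₃^3 + (-235811 : ℤ)*t₁*t₂ + (399909 : ℤ)*t₁*t₂*t₃ + (113520 : ℤ)*t₁*t₂*t₃^2) * (hs 4 1 0))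
  have h2 : t₂ = 0 := by
    rcases mul_eq_zero.mp ht2 with h | h
    · norm_num at h
    · exact h
  have h3 : t₃ = 0 := by
    rcases mul_eq_zero.mp ht3 with h | h
    · norm_num at h
    · exact h
  have h1 : t₁ * (t₁ + 1) = 0 := by
    rcases mul_eq_zero.mp ht1 with h | h
    · norm_num at h
    · linear_combination h
  rcases mul_eq_zero.mp h1 with h | h
  · subst h h2 h3
    exact Or.inl rfl
  · have h' : t₁ = -1 := by omega
    subst h' h2 h3
    exact Or.inr rfl
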